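/- Let G be a finite simple graph. Define M_0 = ∅, and for each i ≥ 0 let P*_{i+1} be a maximal (with respect to inclusion) set of pairwise vertex-disjoint M_i-augmenting paths of length 2i + 1, and set M_{i+1} = M_i ⊕ E(P*_{i+1}). Then for every i, M_i is a matching in G and every M_i-augmenting path has length at least 2i + 1. -/

import Mathlib

/-- The set of vertices covered by a set `M` of edges. -/
def coveredVerts {V : Type*} (M : Set (Sym2 V)) : Set V := {x : V | ∃ e ∈ M, x ∈ e}

/-- `M` is a matching in `G`: a set of edges of `G` that are pairwise non-adjacent. -/
def IsMatchingSet {V : Type*} (G : SimpleGraph V) (M : Set (Sym2 V)) : Prop :=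
  M ⊆ G.edgeSet ∧ ∀ e ∈ M, ∀ f ∈ M, e ≠ f → ∀ x : V, x ∈ e → x ∉ f

/-- `p` is an `M`-augmenting path: a simple path with at least one edge, both of whose
endpoints are `M`-free, and whose edges alternate between `E ∖ M` and `M` (the edge at
position `i` belongs to `M` iff `i` is odd). -/
def IsAugPath {V : Type*} (G : SimpleGraph V) (M : Set (Sym2 V)) {u v : V}
    (p : G.Walk u v) : Prop :=
  p.IsPath ∧ 0 < p.length ∧ u ∉ coveredVerts M ∧ v ∉ coveredVerts M ∧
    ∀ (i : ℕ) (h : i < p.edges.length), (p.edges.get ⟨i, h⟩ ∈ M ↔ Odd i)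

/-- An `M`-augmenting path in `G`, bundled with its endpoints. -/
structure AugPath {V : Type*} (G : SimpleGraph V) (M : Set (Sym2 V)) where
  src : V
  tgt : V
  walk : G.Walk src tgt
  isAug : IsAugPath G M walk

/-- Two bundled augmenting paths are vertex-disjoint. -/
def AugPath.VDisj {V : Type*} {G : SimpleGraph V} {M M' : Set (Sym2 V)}
    (p : AugPath G M) (q : AugPath G M') : Prop :=
  ∀ x : V, x ∈ p.walk.support → x ∉ q.walk.support

/-- `E(P)`: the set of edges appearing in a (finite) family `P` of augmenting paths. -/
def famEdges {V : Type*} {G : SimpleGraph V} {M : Set (Sym2 V)} {m : ℕ}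
    (P : Fin m → AugPath G M) : Set (Sym2 V) :=
  {e : Sym2 V | ∃ i : Fin m, e ∈ (P i).walk.edges}

section Helpers

open SimpleGraph

variable {V : Type*} {G : SimpleGraph V}

lemma hk_edges_get {u v : V} (p : G.Walk u v) : ∀ (i : ℕ) (h : i < p.edges.length),
    p.edges.get ⟨i, h⟩ = s(p.getVert i, p.getVert (i+1)) := by
  induction p with
  | nil => intro i h; simp at h
  | cons hadj q ih =>
    intro i h
    match i with
    | 0 => simp [Walk.edges_cons, Walk.getVert_zero, Walk.getVert_cons_succ]
    | (n+1) =>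
      simp only [Walk.edges_cons, List.get_cons_succ, Walk.getVert_cons_succ]
      exact ih n _

lemma hk_support_get {u v : V} (p : G.Walk u v) : ∀ (i : ℕ) (h : i < p.support.length),
    p.support.get ⟨i, h⟩ = p.getVert i := by
  induction p with
  | nil =>
    intro i h
    simp only [Walk.support_nil, List.length_cons, List.length_nil] at h
    match i with
    | 0 => simp [Walk.getVert]
  | cons hadj q ih =>
    intro i h
    match i with
    | 0 => simp
    | (n+1) =>
      simp only [Walk.support_cons, List.get_cons_succ, Walk.getVert_cons_succ]
      exact ih n _

lemma hk_getVert_inj {u v : V} {p : G.Walk u v} (hp : p.IsPath) {a b : ℕ}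
    (ha : a ≤ p.length) (hb : b ≤ p.length) (h : p.getVert a = p.getVert b) : a = b := by
  have hl : p.support.length = p.length + 1 := by
    simp [Walk.length_support]
  have h1 : p.support.get ⟨a, by omega⟩ = p.support.get ⟨b, by omega⟩ := by
    rw [hk_support_get, hk_support_get]; exact h
  have := (List.nodup_iff_injective_get.mp hp.support_nodup) h1
  simpa using congrArg Fin.val this

lemma hk_getVert_mem_support {u v : V} (p : G.Walk u v) (i : ℕ) :
    p.getVert i ∈ p.support := by
  rcases le_or_gt i p.length with h | h
  · exact Walk.mem_support_iff_exists_getVert.mpr ⟨i, rfl, h⟩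
  · exact Walk.mem_support_iff_exists_getVert.mpr
      ⟨p.length, by rw [Walk.getVert_of_length_le p h.le, Walk.getVert_length], le_rfl⟩

lemma hk_mem_support_of_edge {u v : V} {p : G.Walk u v} {e : Sym2 V} {x : V}
    (he : e ∈ p.edges) (hx : x ∈ e) : x ∈ p.support := by
  induction e with
  | _ a b =>
    rcases Sym2.mem_iff.mp hx with rfl | rfl
    · exact p.fst_mem_support_of_mem_edges he
    · exact p.snd_mem_support_of_mem_edges he

lemma match_unique {C : Set (Sym2 V)} (hC : IsMatchingSet G C) {e f : Sym2 V}
    (he : e ∈ C) (hf : f ∈ C) {x : V} (hxe : x ∈ e) (hxf : x ∈ f) : e = f := by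
  by_contra hne
  exact hC.2 e he f hf hne x hxe hxf

lemma hk_concat_isPath {u v w : V} {p : G.Walk u v} (hp : p.IsPath) (h : G.Adj v w)
    (hw : w ∉ p.support) : (p.concat h).IsPath := by
  rw [← Walk.isPath_reverse_iff, Walk.reverse_concat]
  rw [Walk.cons_isPath_iff]
  exact ⟨(Walk.isPath_reverse_iff p).mpr hp, by simpa using hw⟩

end Helpers

section Cover

open SimpleGraph

variable {V : Type*} {G : SimpleGraph V}

/-- In an alternating path, any matching edge touching the path lies on the path. -/
lemma cover_in_edges {C : Set (Sym2 V)} (hC : IsMatchingSet G C) {u v : V} {w : G.Walk u v}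
    (hL : 0 < w.length) (r : ℕ) (hr : r < 2)
    (hpat : ∀ (i : ℕ) (h : i < w.edges.length), (w.edges.get ⟨i, h⟩ ∈ C ↔ i % 2 = r))
    (hu : r = 0 ∨ u ∉ coveredVerts C) (hv : (w.length - 1) % 2 = r ∨ v ∉ coveredVerts C) :
    ∀ x ∈ w.support, ∀ e ∈ C, x ∈ e → e ∈ w.edges := by
  intro x hxs e heC hxe
  obtain ⟨s, hseq, hsle⟩ := Walk.mem_support_iff_exists_getVert.mp hxs
  have hEL : w.edges.length = w.length := Walk.length_edges w
  have key : ∃ t, t < w.length ∧ t % 2 = r ∧ (s = t ∨ s = t + 1) := by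
    rcases Nat.eq_zero_or_pos s with rfl | hs0
    · rcases hu with hr | hu
      · exact ⟨0, hL, by omega, Or.inl rfl⟩
      · have hux : u = x := by rw [← hseq, Walk.getVert_zero]
        exact absurd ⟨e, heC, hux ▸ hxe⟩ hu
    rcases eq_or_lt_of_le hsle with rfl | hsL
    · rcases hv with hr | hv
      · exact ⟨w.length - 1, by omega, hr, by omega⟩
      · have hvx : v = x := by rw [← hseq, Walk.getVert_length]
        exact absurd ⟨e, heC, hvx ▸ hxe⟩ hv
    · refine ⟨if s % 2 = r then s else s - 1, ?_, ?_, ?_⟩ <;> split <;> omega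
  obtain ⟨t, htL, htr, hst⟩ := key
  have hft : w.edges.get ⟨t, by omega⟩ ∈ C := (hpat t (by omega)).mpr htr
  have hxft : x ∈ w.edges.get ⟨t, by omega⟩ := by
    rw [hk_edges_get, ← hseq]
    rcases hst with rfl | rfl
    · exact Sym2.mem_mk_left _ _
    · exact Sym2.mem_mk_right _ _
  have := match_unique hC heC hft hxe hxft
  rw [this]
  exact List.get_mem ..

/-- In an alternating path of odd length starting and ending with `C`-edges,
every vertex of the path is covered by a `C`-edge on the path. -/
lemma cover_covered {C : Set (Sym2 V)} {u v : V} {w : G.Walk u v}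
    (hL : 0 < w.length) (hodd : w.length % 2 = 1)
    (hpat : ∀ (i : ℕ) (h : i < w.edges.length), (w.edges.get ⟨i, h⟩ ∈ C ↔ i % 2 = 0)) :
    ∀ x ∈ w.support, ∃ e, e ∈ C ∧ x ∈ e ∧ e ∈ w.edges := by
  intro x hxs
  obtain ⟨s, hseq, hsle⟩ := Walk.mem_support_iff_exists_getVert.mp hxs
  have hEL : w.edges.length = w.length := Walk.length_edges w
  have key : ∃ t, t < w.length ∧ t % 2 = 0 ∧ (s = t ∨ s = t + 1) := by
    refine ⟨if s = w.length then w.length - 1 else if s % 2 = 0 then s else s - 1, ?_, ?_, ?_⟩ <;>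
      split <;> try split
    all_goals omega
  obtain ⟨t, htL, htr, hst⟩ := key
  refine ⟨w.edges.get ⟨t, by omega⟩, (hpat t (by omega)).mpr htr, ?_, List.get_mem ..⟩
  rw [hk_edges_get, ← hseq]
  rcases hst with rfl | rfl
  · exact Sym2.mem_mk_left _ _
  · exact Sym2.mem_mk_right _ _

/-- Augmenting a matching along a disjoint family of alternating paths yields a matching. -/
lemma sdMatch {C : Set (Sym2 V)} (hC : IsMatchingSet G C) {n : ℕ} {u v : Fin n → V}
    (w : ∀ j, G.Walk (u j) (v j)) (hw : ∀ j, (w j).IsPath) (hL : ∀ j, 0 < (w j).length)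
    (r : Fin n → ℕ) (hr : ∀ j, r j < 2)
    (hpat : ∀ j (i : ℕ) (h : i < (w j).edges.length),
      ((w j).edges.get ⟨i, h⟩ ∈ C ↔ i % 2 = r j))
    (hu : ∀ j, r j = 0 ∨ u j ∉ coveredVerts C)
    (hv : ∀ j, ((w j).length - 1) % 2 = r j ∨ v j ∉ coveredVerts C)
    (hdj : ∀ j j', j ≠ j' → ∀ x, x ∈ (w j).support → x ∉ (w j').support) :
    IsMatchingSet G (symmDiff C {e | ∃ j, e ∈ (w j).edges}) := by
  set S : Set (Sym2 V) := {e | ∃ j, e ∈ (w j).edges} with hS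
  constructor
  · intro e he
    rcases Set.mem_symmDiff.mp he with ⟨heC, -⟩ | ⟨⟨j, hej⟩, -⟩
    · exact hC.1 heC
    · exact (w j).edges_subset_edgeSet hej
  · intro e he f hf hef x hxe hxf
    rcases Set.mem_symmDiff.mp he with ⟨heC, heS⟩ | ⟨⟨j, hej⟩, heC⟩ <;>
      rcases Set.mem_symmDiff.mp hf with ⟨hfC, hfS⟩ | ⟨⟨j', hfj⟩, hfC⟩
    · exact hC.2 e heC f hfC hef x hxe hxf
    · -- e ∈ C \ S, f on walk j'
      have hxs : x ∈ (w j').support := hk_mem_support_of_edge hfj hxf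
      have := cover_in_edges hC (hL j') (r j') (hr j') (hpat j') (hu j') (hv j') x hxs e heC hxe
      exact heS ⟨j', this⟩
    · have hxs : x ∈ (w j).support := hk_mem_support_of_edge hej hxe
      have := cover_in_edges hC (hL j) (r j) (hr j) (hpat j) (hu j) (hv j) x hxs f hfC hxf
      exact hfS ⟨j, this⟩
    · -- both on walks
      rcases eq_or_ne j j' with rfl | hjj
      · obtain ⟨⟨t₁, ht₁⟩, rfl⟩ := List.mem_iff_get.mp hej
        obtain ⟨⟨t₂, ht₂⟩, rfl⟩ := List.mem_iff_get.mp hfj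
        have hEL : (w j).edges.length = (w j).length := Walk.length_edges (w j)
        have hp₁ : ¬ (t₁ % 2 = r j) := fun hh => heC ((hpat j t₁ ht₁).mpr hh)
        have hp₂ : ¬ (t₂ % 2 = r j) := fun hh => hfC ((hpat j t₂ ht₂).mpr hh)
        have htne : t₁ ≠ t₂ := by rintro rfl; exact hef rfl
        have h1 := hk_edges_get (w j) t₁ ht₁
        have h2 := hk_edges_get (w j) t₂ ht₂
        rw [h1] at hxe; rw [h2] at hxf
        rcases Sym2.mem_iff.mp hxe with hxa | hxa <;> rcases Sym2.mem_iff.mp hxf with hxb | hxb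
        all_goals {
          have hrj := hr j
          have hinj := hk_getVert_inj (hw j) (by omega) (by omega) (hxa.symm.trans hxb)
          omega }
      · have hxs : x ∈ (w j).support := hk_mem_support_of_edge hej hxe
        have hxs' : x ∈ (w j').support := hk_mem_support_of_edge hfj hxf
        exact hdj j j' hjj x hxs hxs'

lemma hk_get_congr {α : Type*} {l l' : List α} (h : l = l') (i : ℕ) (hi : i < l.length) :
    l.get ⟨i, hi⟩ = l'.get ⟨i, by rw [← h]; exact hi⟩ := by subst h; rfl

end Cover

section Counting

open SimpleGraph

lemma card_range_mod (r : ℕ) (hr : r < 2) :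
    ∀ n, ((Finset.range n).filter (fun i => i % 2 = r)).card = (n + 1 - r) / 2 := by
  intro n
  induction n with
  | zero => simp; omega
  | succ n ih =>
    rw [Finset.range_add_one, Finset.filter_insert]
    by_cases h : n % 2 = r
    · rw [if_pos h, Finset.card_insert_of_notMem (by simp)]
      omega
    · rw [if_neg h]
      omega

variable {V : Type*} {G : SimpleGraph V} [Fintype V]

lemma count_pat {l : List (Sym2 V)} (hnd : l.Nodup) (C : Set (Sym2 V)) (r : ℕ) (hr : r < 2)
    (hpat : ∀ (i : ℕ) (h : i < l.length), (l.get ⟨i, h⟩ ∈ C ↔ i % 2 = r)) :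
    ({e | e ∈ l} ∩ C).ncard = (l.length + 1 - r) / 2 := by
  classical
  have hset : ({e | e ∈ l} ∩ C) =
      ↑(((Finset.univ : Finset (Fin l.length)).filter (fun i => i.val % 2 = r)).image
        (fun i => l.get i)) := by
    ext e
    simp only [Set.mem_inter_iff, Set.mem_setOf_eq, Finset.coe_image, Set.mem_image,
      Finset.mem_coe, Finset.mem_filter, Finset.mem_univ, true_and]
    constructor
    · rintro ⟨hel, heC⟩
      obtain ⟨i, hi⟩ := List.mem_iff_get.mp hel
      exact ⟨i, (hpat i i.isLt).mp (hi ▸ heC), hi⟩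
    · rintro ⟨i, hir, rfl⟩
      exact ⟨List.get_mem .., (hpat i i.isLt).mpr hir⟩
  rw [hset, Set.ncard_coe_finset,
    Finset.card_image_of_injOn (fun a _ b _ h => List.nodup_iff_injective_get.mp hnd h)]
  have : ((Finset.univ : Finset (Fin l.length)).filter (fun i => i.val % 2 = r)).card =
      ((Finset.range l.length).filter (fun i => i % 2 = r)).card := by
    refine Finset.card_nbij (fun i => i.val) ?_ ?_ ?_
    · intro a ha; simp at ha ⊢; omega
    · intro a _ b _ h; exact Fin.ext h
    · intro b hb
      simp only [Finset.coe_filter, Finset.mem_range, Set.mem_setOf_eq] at hb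
      exact ⟨⟨b, hb.1⟩, by simp [hb.2], rfl⟩
  rw [this, card_range_mod r hr]

lemma ncard_list_set {l : List (Sym2 V)} (hnd : l.Nodup) : ({e | e ∈ l} : Set (Sym2 V)).ncard = l.length := by
  classical
  have : ({e | e ∈ l} : Set (Sym2 V)) = ↑l.toFinset := by ext e; simp
  rw [this, Set.ncard_coe_finset, List.toFinset_card_of_nodup hnd]

lemma sd_card (A B : Set (Sym2 V)) :
    (symmDiff A B).ncard + (A ∩ B).ncard + (A ∩ B).ncard = A.ncard + B.ncard := by
  have hdAB : Disjoint (A \ B) (B \ A) := by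
    rw [Set.disjoint_left]; rintro e ⟨h1, h2⟩ ⟨h3, h4⟩; exact h2 h3
  have hA : (A \ B).ncard + (A ∩ B).ncard = A.ncard := by
    rw [← Set.ncard_union_eq (by rw [Set.disjoint_left]; rintro e ⟨h1, h2⟩ ⟨h3, h4⟩; exact h2 h4)
      (Set.toFinite _) (Set.toFinite _), Set.diff_union_inter]
  have hB : (B \ A).ncard + (A ∩ B).ncard = B.ncard := by
    rw [← Set.ncard_union_eq (by rw [Set.disjoint_left]; rintro e ⟨h1, h2⟩ ⟨h3, h4⟩; exact h2 h3)
      (Set.toFinite _) (Set.toFinite _), Set.inter_comm, Set.diff_union_inter]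
  rw [Set.symmDiff_def, Set.ncard_union_eq hdAB (Set.toFinite _) (Set.toFinite _)]
  omega

lemma ncard_iUnion_fin {α : Type*} :
    ∀ (k : ℕ) (S : Fin k → Set α), (∀ j, (S j).Finite) →
      (∀ j j', j ≠ j' → Disjoint (S j) (S j')) →
      (⋃ j, S j).ncard = ∑ j, (S j).ncard := by
  intro k
  induction k with
  | zero => intro S _ _; simp
  | succ k ih =>
    intro S hfin hdisj
    have hsplit : (⋃ j, S j) = S 0 ∪ ⋃ j : Fin k, S j.succ := by
      ext x; simp [Set.mem_iUnion, Fin.exists_fin_succ]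
    have hfinU : (⋃ j : Fin k, S j.succ).Finite := Set.finite_iUnion (fun j => hfin j.succ)
    rw [hsplit, Set.ncard_union_eq ?_ (hfin 0) hfinU]
    · rw [ih (fun j => S j.succ) (fun j => hfin j.succ)
        (fun j j' h => hdisj j.succ j'.succ (by simpa using h)), Fin.sum_univ_succ]
    · exact Set.disjoint_iUnion_right.mpr fun j => hdisj 0 j.succ (Fin.succ_ne_zero j).symm

end Counting

section Cov

open SimpleGraph

variable {V : Type*} {G : SimpleGraph V} [Fintype V]

lemma match_sub {C D : Set (Sym2 V)} (hC : IsMatchingSet G C) :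
    IsMatchingSet G (C \ D) :=
  ⟨fun e he => hC.1 he.1, fun e he f hf hef x hxe => hC.2 e he.1 f hf.1 hef x hxe⟩

lemma cov_card : ∀ (n : ℕ) (C : Set (Sym2 V)), C.ncard = n → IsMatchingSet G C →
    (coveredVerts C).ncard = 2 * C.ncard := by
  intro n
  induction n with
  | zero =>
    intro C hn _
    have : C = ∅ := (Set.ncard_eq_zero (Set.toFinite _)).mp hn
    subst this
    simp [coveredVerts]
  | succ n ih =>
    intro C hn hC
    have hne : C.Nonempty := Set.nonempty_of_ncard_ne_zero (by omega)
    obtain ⟨e, heC⟩ := hne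
    have hC' : IsMatchingSet G (C \ {e}) := match_sub hC
    have hn' : (C \ {e}).ncard = n := by
      rw [Set.ncard_diff_singleton_of_mem heC]; omega
    have hcov : coveredVerts C = {x | x ∈ e} ∪ coveredVerts (C \ {e}) := by
      ext x
      constructor
      · rintro ⟨f, hfC, hxf⟩
        rcases eq_or_ne f e with rfl | hfe
        · exact Or.inl hxf
        · exact Or.inr ⟨f, ⟨hfC, hfe⟩, hxf⟩
      · rintro (hx | ⟨f, hfC, hxf⟩)
        · exact ⟨e, heC, hx⟩
        · exact ⟨f, hfC.1, hxf⟩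
    have hdisj : Disjoint {x | x ∈ e} (coveredVerts (C \ {e})) := by
      rw [Set.disjoint_left]
      rintro x hxe ⟨f, ⟨hfC, hfe⟩, hxf⟩
      exact hfe (by rw [match_unique hC hfC heC hxf hxe]; rfl)
    have he2 : ({x | x ∈ e} : Set V).ncard = 2 := by
      induction e with
      | _ a b =>
        have hab : a ≠ b := (G.mem_edgeSet.mp (hC.1 heC)).ne
        have : ({x | x ∈ s(a, b)} : Set V) = {a, b} := by ext x; simp [Sym2.mem_iff]
        rw [this, Set.ncard_pair hab]
    rw [hcov, Set.ncard_union_eq hdisj (Set.toFinite _) (Set.toFinite _), he2, ih _ hn' hC',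
      hn', hn]
    omega

lemma hk_get_app {α : Type*} (l : List α) (g : α) (i : ℕ) (h : i < (l ++ [g]).length) :
    (l ++ [g]).get ⟨i, h⟩ = if hi : i < l.length then l.get ⟨i, hi⟩ else g := by
  by_cases hi : i < l.length
  · rw [dif_pos hi]
    simp [List.get_eq_getElem, List.getElem_append_left hi]
  · rw [dif_neg hi]
    have hil : i = l.length := by simp at h; omega
    subst hil
    simp [List.get_eq_getElem]

end Cov


section Berge

open SimpleGraph

variable {V : Type*} {G : SimpleGraph V} [Fintype V]

lemma berge : ∀ (nn : ℕ) (F N : Set (Sym2 V)), N.ncard ≤ nn → IsMatchingSet G F →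
    IsMatchingSet G N → N.ncard < F.ncard →
    ∃ (a b : V) (p : G.Walk a b), IsAugPath G N p ∧
      (∀ (i : ℕ) (h : i < p.edges.length), (p.edges.get ⟨i, h⟩ ∈ F ↔ i % 2 = 0)) := by
  intro nn
  induction nn using Nat.strong_induction_on with
  | _ nn ih =>
  intro F N hNn hF hN hlt
  -- find a starting vertex, F-covered but N-free
  have hcovF := cov_card F.ncard F rfl hF
  have hcovN := cov_card N.ncard N rfl hN
  have hns : ¬ (coveredVerts F ⊆ coveredVerts N) := by
    intro hsub
    have := Set.ncard_le_ncard hsub (Set.toFinite _)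
    omega
  obtain ⟨v₀, hv₀F, hv₀N⟩ := Set.not_subset.mp hns
  -- the set of lengths of alternating paths from v₀
  set T : Set ℕ := {L | ∃ (x : V) (p : G.Walk v₀ x), (p.IsPath ∧ 0 < p.length ∧
    (∀ (i : ℕ) (h : i < p.edges.length), (p.edges.get ⟨i, h⟩ ∈ F ↔ i % 2 = 0)) ∧
    (∀ (i : ℕ) (h : i < p.edges.length), (p.edges.get ⟨i, h⟩ ∈ N ↔ i % 2 = 1))) ∧
    p.length = L} with hT
  obtain ⟨e₀, he₀F, hv₀e₀⟩ := hv₀F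
  have he₀ : s(v₀, Sym2.Mem.other hv₀e₀) = e₀ := Sym2.other_spec hv₀e₀
  have hadj₀ : G.Adj v₀ (Sym2.Mem.other hv₀e₀) := by
    have h := hF.1 he₀F; rw [← he₀] at h; exact G.mem_edgeSet.mp h
  have hT1 : 1 ∈ T := by
    refine ⟨Sym2.Mem.other hv₀e₀, Walk.cons hadj₀ Walk.nil, ⟨?_, by simp, ?_, ?_⟩, by simp⟩
    · rw [Walk.cons_isPath_iff]
      refine ⟨Walk.IsPath.nil, ?_⟩
      simp only [Walk.support_nil, List.mem_singleton]
      exact hadj₀.ne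
    · intro i h
      have hedges : (Walk.cons hadj₀ Walk.nil).edges = [s(v₀, Sym2.Mem.other hv₀e₀)] := by simp
      have hi1 : i < 1 := by simpa [hedges] using h
      obtain rfl : i = 0 := by omega
      rw [hk_get_congr hedges]
      change s(v₀, Sym2.Mem.other hv₀e₀) ∈ F ↔ 0 % 2 = 0
      constructor
      · intro _; rfl
      · intro _; rw [he₀]; exact he₀F
    · intro i h
      have hedges : (Walk.cons hadj₀ Walk.nil).edges = [s(v₀, Sym2.Mem.other hv₀e₀)] := by simp
      have hi1 : i < 1 := by simpa [hedges] using h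
      obtain rfl : i = 0 := by omega
      rw [hk_get_congr hedges]
      change s(v₀, Sym2.Mem.other hv₀e₀) ∈ N ↔ 0 % 2 = 1
      constructor
      · intro hgN; exact absurd ⟨s(v₀, Sym2.Mem.other hv₀e₀), hgN, Sym2.mem_mk_left _ _⟩ hv₀N
      · omega
  have hbdd : BddAbove T := by
    refine ⟨Fintype.card V, ?_⟩
    rintro L ⟨x, p, ⟨hpath, -, -, -⟩, rfl⟩
    exact hpath.length_lt.le
  obtain ⟨b, p, ⟨hpath, hpos, hpatF, hpatN⟩, hplen⟩ := Nat.sSup_mem ⟨1, hT1⟩ hbdd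
  have hmax : ∀ L ∈ T, L ≤ sSup T := fun L hL => le_csSup hbdd hL
  have hEL : p.edges.length = p.length := Walk.length_edges p
  have hgetb : p.getVert p.length = b := Walk.getVert_length p
  by_cases hbN : b ∈ coveredVerts N
  · -- we can never get stuck right after an F-edge
    have hparity : p.length % 2 = 0 := by
      by_contra hpar0
      have hpar : p.length % 2 = 1 := by omega
      obtain ⟨g, hgN, hbg⟩ := hbN
      have hg : s(b, Sym2.Mem.other hbg) = g := Sym2.other_spec hbg
      have hadj : G.Adj b (Sym2.Mem.other hbg) := by
        have h := hN.1 hgN; rw [← hg] at h; exact G.mem_edgeSet.mp h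
      set w' := Sym2.Mem.other hbg with hw'def
      have hec : (p.concat hadj).edges = p.edges ++ [s(b, w')] := by
        rw [Walk.edges_concat, List.concat_eq_append]
      have hlastF : p.edges.get ⟨p.length - 1, by omega⟩ ∈ F :=
        (hpatF _ _).mpr (by omega)
      have hlastN : p.edges.get ⟨p.length - 1, by omega⟩ ∉ N := by
        intro hc; have := (hpatN _ _).mp hc; omega
      have hblast : b ∈ p.edges.get ⟨p.length - 1, by omega⟩ := by
        rw [hk_edges_get, show p.length - 1 + 1 = p.length by omega, hgetb]
        exact Sym2.mem_mk_right _ _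
      have hw' : w' ∉ p.support := by
        intro hw's
        obtain ⟨s, hseq, hsle⟩ := Walk.mem_support_iff_exists_getVert.mp hw's
        rcases Nat.eq_zero_or_pos s with rfl | hs0
        · rw [Walk.getVert_zero] at hseq
          exact hv₀N ⟨g, hgN, by rw [← hg, ← hseq]; exact Sym2.mem_mk_right _ _⟩
        rcases eq_or_lt_of_le hsle with rfl | hsL
        · rw [hgetb] at hseq
          exact hadj.ne hseq
        · obtain ⟨t, htL, ht2, hst⟩ : ∃ t, t < p.length ∧ t % 2 = 1 ∧ (s = t ∨ s = t + 1) := by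
            refine ⟨if s % 2 = 1 then s else s - 1, ?_, ?_, ?_⟩ <;> split <;> omega
          have htN : p.edges.get ⟨t, by omega⟩ ∈ N := (hpatN _ _).mpr ht2
          have hw't : w' ∈ p.edges.get ⟨t, by omega⟩ := by
            rw [hk_edges_get, ← hseq]
            rcases hst with rfl | rfl
            · exact Sym2.mem_mk_left _ _
            · exact Sym2.mem_mk_right _ _
          have hgt : g = p.edges.get ⟨t, by omega⟩ :=
            match_unique hN hgN htN (by rw [← hg]; exact Sym2.mem_mk_right _ _) hw't
          have hbt : b ∈ p.edges.get ⟨t, by omega⟩ := by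
            rw [← hgt, ← hg]; exact Sym2.mem_mk_left _ _
          rw [hk_edges_get] at hbt
          rcases Sym2.mem_iff.mp hbt with hbt | hbt
          · have := hk_getVert_inj hpath le_rfl (by omega) (hgetb.trans hbt)
            omega
          · have := hk_getVert_inj hpath le_rfl (by omega) (hgetb.trans hbt)
            omega
      have hQ' : p.length + 1 ∈ T := by
        refine ⟨w', p.concat hadj, ⟨hk_concat_isPath hpath hadj hw', by
          rw [Walk.length_concat]; omega, ?_, ?_⟩, by rw [Walk.length_concat]⟩
        · intro i h
          have h' : i < p.edges.length + 1 := by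
            have := h; rw [hec, List.length_append] at this; simpa using this
          rw [hk_get_congr hec, hk_get_app]
          split
          · exact hpatF i _
          · rename_i hi
            have hiL : i = p.length := by omega
            constructor
            · intro hgF
              exfalso
              have heq := match_unique hF hgF hlastF (Sym2.mem_mk_left _ _) hblast
              have : s(b, w') ∈ N := by rw [hg]; exact hgN
              rw [heq] at this
              exact hlastN this
            · intro hi0; omega
        · intro i h
          have h' : i < p.edges.length + 1 := by
            have := h; rw [hec, List.length_append] at this; simpa using this
          rw [hk_get_congr hec, hk_get_app]
          split
          · exact hpatN i _
          · rename_i hi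
            have hiL : i = p.length := by omega
            constructor
            · intro _; omega
            · intro _
              rw [hg]; exact hgN
      have := hmax _ hQ'
      omega
    have hL2 : 2 ≤ p.length := by omega
    have hbF : b ∉ coveredVerts F := by
      intro hbF
      obtain ⟨g, hgF, hbg⟩ := hbF
      have hg : s(b, Sym2.Mem.other hbg) = g := Sym2.other_spec hbg
      have hadj : G.Adj b (Sym2.Mem.other hbg) := by
        have h := hF.1 hgF; rw [← hg] at h; exact G.mem_edgeSet.mp h
      set w' := Sym2.Mem.other hbg with hw'def
      have hec : (p.concat hadj).edges = p.edges ++ [s(b, w')] := by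
        rw [Walk.edges_concat, List.concat_eq_append]
      have hlastN : p.edges.get ⟨p.length - 1, by omega⟩ ∈ N :=
        (hpatN _ _).mpr (by omega)
      have hlastF : p.edges.get ⟨p.length - 1, by omega⟩ ∉ F := by
        intro hc; have := (hpatF _ _).mp hc; omega
      have hblast : b ∈ p.edges.get ⟨p.length - 1, by omega⟩ := by
        rw [hk_edges_get, show p.length - 1 + 1 = p.length by omega, hgetb]
        exact Sym2.mem_mk_right _ _
      have h0F : p.edges.get ⟨0, by omega⟩ ∈ F := (hpatF _ _).mpr (by omega)
      have hv₀0 : v₀ ∈ p.edges.get ⟨0, by omega⟩ := by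
        rw [hk_edges_get, Walk.getVert_zero]
        exact Sym2.mem_mk_left _ _
      have hw' : w' ∉ p.support := by
        intro hw's
        obtain ⟨s, hseq, hsle⟩ := Walk.mem_support_iff_exists_getVert.mp hw's
        rcases Nat.eq_zero_or_pos s with rfl | hs0
        · rw [Walk.getVert_zero] at hseq
          have hgv₀ : v₀ ∈ g := by rw [← hg, ← hseq]; exact Sym2.mem_mk_right _ _
          have hge := match_unique hF hgF h0F hgv₀ hv₀0
          have hb0 : b ∈ p.edges.get ⟨0, by omega⟩ := by rw [← hge, ← hg]; exact Sym2.mem_mk_left _ _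
          rw [hk_edges_get] at hb0
          rcases Sym2.mem_iff.mp hb0 with hb0 | hb0
          · have := hk_getVert_inj hpath le_rfl (by omega) (hgetb.trans hb0)
            omega
          · have := hk_getVert_inj hpath le_rfl (by omega) (hgetb.trans hb0)
            omega
        rcases eq_or_lt_of_le hsle with rfl | hsL
        · rw [hgetb] at hseq
          exact hadj.ne hseq
        · obtain ⟨t, htL, ht2, hst⟩ : ∃ t, t < p.length ∧ t % 2 = 0 ∧ (s = t ∨ s = t + 1) := by
            refine ⟨if s % 2 = 0 then s else s - 1, ?_, ?_, ?_⟩ <;> split <;> omega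
          have htF : p.edges.get ⟨t, by omega⟩ ∈ F := (hpatF _ _).mpr ht2
          have hw't : w' ∈ p.edges.get ⟨t, by omega⟩ := by
            rw [hk_edges_get, ← hseq]
            rcases hst with rfl | rfl
            · exact Sym2.mem_mk_left _ _
            · exact Sym2.mem_mk_right _ _
          have hgt : g = p.edges.get ⟨t, by omega⟩ :=
            match_unique hF hgF htF (by rw [← hg]; exact Sym2.mem_mk_right _ _) hw't
          have hbt : b ∈ p.edges.get ⟨t, by omega⟩ := by
            rw [← hgt, ← hg]; exact Sym2.mem_mk_left _ _
          rw [hk_edges_get] at hbt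
          rcases Sym2.mem_iff.mp hbt with hbt | hbt
          · have := hk_getVert_inj hpath le_rfl (by omega) (hgetb.trans hbt)
            omega
          · have := hk_getVert_inj hpath le_rfl (by omega) (hgetb.trans hbt)
            omega
      have hQ' : p.length + 1 ∈ T := by
        refine ⟨w', p.concat hadj, ⟨hk_concat_isPath hpath hadj hw', by
          rw [Walk.length_concat]; omega, ?_, ?_⟩, by rw [Walk.length_concat]⟩
        · intro i h
          have h' : i < p.edges.length + 1 := by
            have := h; rw [hec, List.length_append] at this; simpa using this
          rw [hk_get_congr hec, hk_get_app]
          split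
          · exact hpatF i _
          · rename_i hi
            have hiL : i = p.length := by omega
            constructor
            · intro _; omega
            · intro _; rw [hg]; exact hgF
        · intro i h
          have h' : i < p.edges.length + 1 := by
            have := h; rw [hec, List.length_append] at this; simpa using this
          rw [hk_get_congr hec, hk_get_app]
          split
          · exact hpatN i _
          · rename_i hi
            have hiL : i = p.length := by omega
            constructor
            · intro hgN2
              exfalso
              have heq := match_unique hN hgN2 hlastN (Sym2.mem_mk_left _ _) hblast
              have : s(b, w') ∈ F := by rw [hg]; exact hgF
              rw [heq] at this
              exact hlastF this
            · intro hi0; omega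
      have := hmax _ hQ'
      omega
    -- dead-end : the path is an entire component; remove it and recurse
    set Ep : Set (Sym2 V) := {e | e ∈ p.edges} with hEpdef
    have hFmeet : ∀ x ∈ p.support, ∀ e ∈ F, x ∈ e → e ∈ p.edges :=
      cover_in_edges hF hpos 0 (by omega) hpatF (Or.inl rfl) (Or.inr hbF)
    have hNmeet : ∀ x ∈ p.support, ∀ e ∈ N, x ∈ e → e ∈ p.edges :=
      cover_in_edges hN hpos 1 (by omega) hpatN (Or.inr hv₀N) (Or.inl (by omega))
    have hcF : (Ep ∩ F).ncard = p.length / 2 := by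
      have h2 := count_pat hpath.edges_nodup F 0 (by omega) hpatF
      rw [hEL] at h2
      rw [hEpdef, h2]
      omega
    have hcN : (Ep ∩ N).ncard = p.length / 2 := by
      have h2 := count_pat hpath.edges_nodup N 1 (by omega) hpatN
      rw [hEL] at h2
      rw [hEpdef, h2]
      omega
    have hF2 : (F \ Ep).ncard = F.ncard - p.length / 2 := by
      rw [← Set.diff_inter_self_eq_diff, Set.ncard_diff Set.inter_subset_right (Set.toFinite _),
        hcF]
    have hN2 : (N \ Ep).ncard = N.ncard - p.length / 2 := by
      rw [← Set.diff_inter_self_eq_diff, Set.ncard_diff Set.inter_subset_right (Set.toFinite _),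
        hcN]
    have haN : p.length / 2 ≤ N.ncard := by
      rw [← hcN]; exact Set.ncard_le_ncard Set.inter_subset_right (Set.toFinite _)
    obtain ⟨a, b₁, p₁, ⟨hp₁path, hp₁pos, hp₁aN, hp₁bN, hp₁patN⟩, hp₁patF⟩ :=
      ih (N \ Ep).ncard (by omega) (F \ Ep) (N \ Ep) le_rfl (match_sub hF) (match_sub hN)
        (by omega)
    have hL₁ : p₁.edges.length = p₁.length := Walk.length_edges p₁
    have hsep : ∀ x, x ∈ p₁.support → x ∉ p.support := by
      intro x hx hxp
      obtain ⟨s, hseq, hsle⟩ := Walk.mem_support_iff_exists_getVert.mp hx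
      obtain ⟨t, htL, hst⟩ : ∃ t, t < p₁.length ∧ (s = t ∨ s = t + 1) := by
        refine ⟨if s = p₁.length then s - 1 else s, ?_, ?_⟩ <;> split <;> omega
      have hxe : x ∈ p₁.edges.get ⟨t, by omega⟩ := by
        rw [hk_edges_get, ← hseq]
        rcases hst with rfl | rfl
        · exact Sym2.mem_mk_left _ _
        · exact Sym2.mem_mk_right _ _
      by_cases ht2 : t % 2 = 0
      · have heF := (hp₁patF t (by omega)).mpr ht2
        exact heF.2 (hFmeet x hxp _ heF.1 hxe)
      · have heN := (hp₁patN t (by omega)).mpr (Nat.odd_iff.mpr (by omega))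
        exact heN.2 (hNmeet x hxp _ heN.1 hxe)
    refine ⟨a, b₁, p₁, ⟨hp₁path, hp₁pos, ?_, ?_, ?_⟩, ?_⟩
    · rintro ⟨g, hgN, hag⟩
      by_cases hgE : g ∈ Ep
      · exact hsep a p₁.start_mem_support (hk_mem_support_of_edge hgE hag)
      · exact hp₁aN ⟨g, ⟨hgN, hgE⟩, hag⟩
    · rintro ⟨g, hgN, hbg⟩
      by_cases hgE : g ∈ Ep
      · exact hsep b₁ p₁.end_mem_support (hk_mem_support_of_edge hgE hbg)
      · exact hp₁bN ⟨g, ⟨hgN, hgE⟩, hbg⟩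
    · intro i h
      constructor
      · intro heN2
        by_contra hodd
        have hi0 : i % 2 = 0 := by rw [Nat.odd_iff] at hodd; omega
        have heF := (hp₁patF i h).mpr hi0
        exact hodd ((hp₁patN i h).mp ⟨heN2, heF.2⟩)
      · intro hodd
        exact ((hp₁patN i h).mpr hodd).1
    · intro i h
      constructor
      · intro heF
        by_contra hi0
        have hodd : Odd i := Nat.odd_iff.mpr (by omega)
        have heN := (hp₁patN i h).mpr hodd
        exact hi0 ((hp₁patF i h).mp ⟨heF, heN.2⟩)
      · intro hi0
        exact ((hp₁patF i h).mpr hi0).1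
  · -- b is N-free : p itself is the augmenting path
    have hLodd : p.length % 2 = 1 := by
      by_contra hpar
      have h1 : (p.length - 1) % 2 = 1 := by omega
      have hb1 : b ∈ p.edges.get ⟨p.length - 1, by omega⟩ := by
        rw [hk_edges_get, show p.length - 1 + 1 = p.length by omega, hgetb]
        exact Sym2.mem_mk_right _ _
      exact hbN ⟨_, (hpatN (p.length - 1) (by omega)).mpr h1, hb1⟩
    exact ⟨v₀, b, p, ⟨hpath, hpos, hv₀N, hbN,
      fun i h => by rw [Nat.odd_iff]; exact hpatN i h⟩, hpatF⟩

end Berge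


section Key

open SimpleGraph

variable {V : Type*} {G : SimpleGraph V} [Fintype V]

lemma key_bound (l : ℕ) (N : Set (Sym2 V)) (hN : IsMatchingSet G N)
    (hbound : ∀ q : AugPath G N, l ≤ q.walk.length) :
    ∀ (s : ℕ) (F : Set (Sym2 V)), IsMatchingSet G F → N.ncard + s ≤ F.ncard →
      s * l ≤ (symmDiff F N).ncard := by
  intro s
  induction s with
  | zero => intro F _ _; simp
  | succ s ihs =>
    intro F hF hcard
    obtain ⟨a, b, p, ⟨hpath, hpos, haN, hbN, hpatN'⟩, hpatF⟩ :=
      berge N.ncard F N le_rfl hF hN (by omega)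
    have hEL : p.edges.length = p.length := Walk.length_edges p
    have hpatN : ∀ (i : ℕ) (h : i < p.edges.length), (p.edges.get ⟨i, h⟩ ∈ N ↔ i % 2 = 1) :=
      fun i h => by rw [← Nat.odd_iff]; exact hpatN' i h
    have hl : l ≤ p.length := hbound ⟨a, b, p, hpath, hpos, haN, hbN, hpatN'⟩
    have hLodd : p.length % 2 = 1 := by
      by_contra h0
      have h1 : (p.length - 1) % 2 = 1 := by omega
      have hb1 : b ∈ p.edges.get ⟨p.length - 1, by omega⟩ := by
        rw [hk_edges_get, show p.length - 1 + 1 = p.length by omega, Walk.getVert_length]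
        exact Sym2.mem_mk_right _ _
      exact hbN ⟨_, (hpatN _ _).mpr h1, hb1⟩
    set Ep : Set (Sym2 V) := {e | e ∈ p.edges} with hEpdef
    have hEpcard : Ep.ncard = p.length := by
      rw [hEpdef, ncard_list_set hpath.edges_nodup, hEL]
    have hsub : Ep ⊆ symmDiff F N := by
      intro e he
      rw [hEpdef] at he
      obtain ⟨⟨i, hi⟩, rfl⟩ := List.mem_iff_get.mp he
      by_cases hi2 : i % 2 = 0
      · exact Set.mem_symmDiff.mpr (Or.inl ⟨(hpatF i hi).mpr hi2,
          fun hc => by have := (hpatN i hi).mp hc; omega⟩)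
      · exact Set.mem_symmDiff.mpr (Or.inr ⟨(hpatN i hi).mpr (by omega),
          fun hc => by have := (hpatF i hi).mp hc; omega⟩)
    have hF' : IsMatchingSet G (symmDiff F Ep) := by
      have hsd := sdMatch hF (n := 1) (u := fun _ => a) (v := fun _ => b) (fun _ => p)
        (fun _ => hpath) (fun _ => hpos) (fun _ => 0) (fun _ => Nat.zero_lt_two)
        (fun _ => hpatF) (fun _ => Or.inl rfl)
        (fun _ => Or.inl (show (p.length - 1) % 2 = 0 by omega))
        (fun j j' hjj => (hjj (Subsingleton.elim j j')).elim)
      have hset : {e | ∃ _j : Fin 1, e ∈ p.edges} = Ep := by ext e; simp [hEpdef]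
      rwa [hset] at hsd
    have hcF : (F ∩ Ep).ncard = (p.length + 1) / 2 := by
      have h2 := count_pat hpath.edges_nodup F 0 (by omega) hpatF
      rw [hEL] at h2
      rw [Set.inter_comm, hEpdef, h2]
      omega
    have hsd := sd_card F Ep
    rw [hcF, hEpcard] at hsd
    have ihres := ihs (symmDiff F Ep) hF' (by omega)
    have hdiff : symmDiff (symmDiff F Ep) N = (symmDiff F N) \ Ep := by
      rw [symmDiff_right_comm]
      ext e
      rw [Set.mem_symmDiff]
      constructor
      · rintro (⟨h1, h2⟩ | ⟨h1, h2⟩)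
        · exact ⟨h1, h2⟩
        · exact absurd (hsub h1) h2
      · rintro ⟨h1, h2⟩
        exact Or.inl ⟨h1, h2⟩
    rw [hdiff, Set.ncard_diff hsub (Set.toFinite _), hEpcard] at ihres
    have hle : p.length ≤ (symmDiff F N).ncard := by
      rw [← hEpcard]; exact Set.ncard_le_ncard hsub (Set.toFinite _)
    have hmul : (s + 1) * l = s * l + l := by ring
    omega

end Key


open SimpleGraph

/-- Start with `M 0 = ∅`, and for each `i` let `P i` be a maximal
(w.r.t. inclusion) family of pairwise vertex-disjoint `M i`-augmenting paths of length
`2i + 1`, and set `M (i+1) = M i ⊕ E(P i)`.  Then for every `i`, `M i` is a matching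
and every `M i`-augmenting path has length at least `2i + 1`. -/
theorem iterated_augmentation_invariant
    {V : Type*} [Fintype V] (G : SimpleGraph V)
    (M : ℕ → Set (Sym2 V)) (hM0 : M 0 = ∅)
    (m : ℕ → ℕ) (P : (i : ℕ) → Fin (m i) → AugPath G (M i))
    (hlen : ∀ i j, (P i j).walk.length = 2 * i + 1)
    (hdisj : ∀ i j j', j ≠ j' → (P i j).VDisj (P i j'))
    (hmaximal : ∀ (i : ℕ) (q : AugPath G (M i)),
      q.walk.length = 2 * i + 1 → ¬ (∀ j, q.VDisj (P i j)))
    (hstep : ∀ i, M (i + 1) = symmDiff (M i) (famEdges (P i))) :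
    ∀ i : ℕ, IsMatchingSet G (M i) ∧
      ∀ q : AugPath G (M i), 2 * i + 1 ≤ q.walk.length := by
  intro i
  induction i with
  | zero =>
    constructor
    · rw [hM0]
      exact ⟨Set.empty_subset _, fun e he => (Set.notMem_empty e he).elim⟩
    · intro q
      have := q.isAug.2.1
      omega
  | succ i IH =>
    obtain ⟨hNmatch, hNbound⟩ := IH
    have hstepi := hstep i
    -- path facts
    have hpatj : ∀ j (t : ℕ) (h : t < (P i j).walk.edges.length),
        ((P i j).walk.edges.get ⟨t, h⟩ ∈ M i ↔ t % 2 = 1) :=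
      fun j t h => ((P i j).isAug.2.2.2.2 t h).trans Nat.odd_iff
    have hedL : ∀ j, (P i j).walk.edges.length = 2 * i + 1 :=
      fun j => (Walk.length_edges _).trans (hlen i j)
    -- (1) M (i+1) is a matching
    have hM'match : IsMatchingSet G (M (i + 1)) := by
      rw [hstepi]
      exact sdMatch hNmatch (n := m i) (u := fun j => (P i j).src) (v := fun j => (P i j).tgt)
        (fun j => (P i j).walk) (fun j => (P i j).isAug.1) (fun j => (P i j).isAug.2.1)
        (fun _ => 1) (fun _ => Nat.one_lt_two) (fun j => hpatj j)
        (fun j => Or.inr (P i j).isAug.2.2.1) (fun j => Or.inr (P i j).isAug.2.2.2.1)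
        (fun j j' hjj => hdisj i j j' hjj)
    refine ⟨hM'match, ?_⟩
    intro q
    by_contra hqlen
    obtain ⟨hqpath, hqpos, hqsrc, hqtgt, hqpat'⟩ := q.isAug
    have hqEL : q.walk.edges.length = q.walk.length := Walk.length_edges _
    have hqpat : ∀ (t : ℕ) (h : t < q.walk.edges.length),
        (q.walk.edges.get ⟨t, h⟩ ∈ M (i + 1) ↔ t % 2 = 1) :=
      fun t h => (hqpat' t h).trans Nat.odd_iff
    have hqodd : q.walk.length % 2 = 1 := by
      by_contra h0
      have h1 : (q.walk.length - 1) % 2 = 1 := by omega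
      have hb1 : q.tgt ∈ q.walk.edges.get ⟨q.walk.length - 1, by omega⟩ := by
        rw [hk_edges_get, show q.walk.length - 1 + 1 = q.walk.length by omega,
          Walk.getVert_length]
        exact Sym2.mem_mk_right _ _
      exact hqtgt ⟨_, (hqpat _ _).mpr h1, hb1⟩
    have hqle : q.walk.length ≤ 2 * i + 1 := by omega
    -- edge sets
    set Sq : Set (Sym2 V) := {e | e ∈ q.walk.edges} with hSqdef
    set Sj : Fin (m i) → Set (Sym2 V) := fun j => {e | e ∈ (P i j).walk.edges} with hSjdef
    have hEPunion : famEdges (P i) = ⋃ j, Sj j := by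
      ext e; simp [famEdges, hSjdef, Set.mem_iUnion]
    have hSjdisj : ∀ j j', j ≠ j' → Disjoint (Sj j) (Sj j') := by
      intro j j' hjj
      rw [Set.disjoint_left]
      intro e hej hej'
      induction e with
      | _ x y =>
        exact hdisj i j j' hjj x (hk_mem_support_of_edge hej (Sym2.mem_mk_left _ _))
          (hk_mem_support_of_edge hej' (Sym2.mem_mk_left _ _))
    have hSjcard : ∀ j, (Sj j).ncard = 2 * i + 1 := fun j => by
      rw [hSjdef]
      rw [ncard_list_set (P i j).isAug.1.edges_nodup, hedL j]
    have hSjN : ∀ j, (Sj j ∩ M i).ncard = i := fun j => by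
      have h2 := count_pat (P i j).isAug.1.edges_nodup (M i) 1 Nat.one_lt_two (hpatj j)
      rw [hedL j] at h2
      rw [hSjdef]
      rw [h2]
      omega
    have hEPcard : (famEdges (P i)).ncard = (m i) * (2 * i + 1) := by
      rw [hEPunion, ncard_iUnion_fin _ _ (fun j => Set.toFinite _) hSjdisj]
      rw [Finset.sum_congr rfl (fun j _ => hSjcard j), Finset.sum_const, Finset.card_univ,
        Fintype.card_fin, smul_eq_mul]
    have hEPN : ((famEdges (P i)) ∩ M i).ncard = (m i) * i := by
      have hsplit : famEdges (P i) ∩ M i = ⋃ j, (Sj j ∩ M i) := by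
        rw [hEPunion, Set.iUnion_inter]
      rw [hsplit, ncard_iUnion_fin _ _ (fun j => Set.toFinite _)
        (fun j j' h => ((hSjdisj j j' h).mono Set.inter_subset_left Set.inter_subset_left))]
      rw [Finset.sum_congr rfl (fun j _ => hSjN j), Finset.sum_const, Finset.card_univ,
        Fintype.card_fin, smul_eq_mul]
    have hM'card : (M (i + 1)).ncard = (M i).ncard + m i := by
      have hsd := sd_card (M i) (famEdges (P i))
      rw [Set.inter_comm] at hsd
      rw [hEPN, hEPcard] at hsd
      have hexp : (m i) * (2 * i + 1) = 2 * ((m i) * i) + m i := by ring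
      rw [hstepi]
      omega
    -- F := M(i+1) ∆ Sq is a matching of larger size
    have hFmatch : IsMatchingSet G (symmDiff (M (i + 1)) Sq) := by
      have hsd := sdMatch hM'match (n := 1) (u := fun _ => q.src) (v := fun _ => q.tgt)
        (fun _ => q.walk) (fun _ => hqpath) (fun _ => hqpos) (fun _ => 1)
        (fun _ => Nat.one_lt_two) (fun _ => hqpat) (fun _ => Or.inr hqsrc)
        (fun _ => Or.inr hqtgt) (fun j j' hjj => (hjj (Subsingleton.elim j j')).elim)
      have hset : {e | ∃ _j : Fin 1, e ∈ q.walk.edges} = Sq := by ext e; simp [hSqdef]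
      rwa [hset] at hsd
    have hSqcard : Sq.ncard = q.walk.length := by
      rw [hSqdef, ncard_list_set hqpath.edges_nodup, hqEL]
    have hSqM' : ((M (i + 1)) ∩ Sq).ncard = q.walk.length / 2 := by
      have h2 := count_pat hqpath.edges_nodup (M (i + 1)) 1 Nat.one_lt_two hqpat
      rw [hqEL] at h2
      rw [Set.inter_comm, hSqdef, h2]
      omega
    have hFcard : (symmDiff (M (i + 1)) Sq).ncard = (M i).ncard + m i + 1 := by
      have hsd := sd_card (M (i + 1)) Sq
      rw [hSqM', hSqcard, hM'card] at hsd
      omega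
    have hkey := key_bound (2 * i + 1) (M i) hNmatch hNbound (m i + 1)
      (symmDiff (M (i + 1)) Sq) hFmatch (by omega)
    have hFN : symmDiff (symmDiff (M (i + 1)) Sq) (M i) = symmDiff (famEdges (P i)) Sq := by
      rw [hstepi]
      ext e
      simp only [Set.mem_symmDiff]
      tauto
    have hsd2 := sd_card (famEdges (P i)) Sq
    rw [hFN] at hkey
    rw [hEPcard, hSqcard] at hsd2
    have hexp2 : (m i + 1) * (2 * i + 1) = m i * (2 * i + 1) + (2 * i + 1) := by ring
    rw [hexp2] at hkey
    have hint0 : ((famEdges (P i)) ∩ Sq).ncard = 0 := by omega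
    have hqlen1 : q.walk.length = 2 * i + 1 := by omega
    have hint : (famEdges (P i)) ∩ Sq = ∅ := (Set.ncard_eq_zero (Set.toFinite _)).mp hint0
    -- q is vertex-disjoint from every path of the family
    have hvd : ∀ j, ∀ x, x ∈ q.walk.support → x ∉ (P i j).walk.support := by
      intro j x hxq hxp
      have patM' : ∀ (t : ℕ) (h : t < (P i j).walk.edges.length),
          ((P i j).walk.edges.get ⟨t, h⟩ ∈ M (i + 1) ↔ t % 2 = 0) := by
        intro t h
        have heEP : (P i j).walk.edges.get ⟨t, h⟩ ∈ famEdges (P i) := ⟨j, List.get_mem ..⟩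
        rw [hstepi]
        constructor
        · intro hm
          rcases Set.mem_symmDiff.mp hm with ⟨-, h2⟩ | ⟨-, h2⟩
          · exact (h2 heEP).elim
          · have : ¬ (t % 2 = 1) := fun hc => h2 ((hpatj j t h).mpr hc)
            omega
        · intro ht
          exact Set.mem_symmDiff.mpr (Or.inr ⟨heEP,
            fun hc => by have := (hpatj j t h).mp hc; omega⟩)
      have hcov := cover_covered (C := M (i + 1)) (w := (P i j).walk) ((P i j).isAug.2.1)
        (by rw [hlen i j]; omega) patM' x hxp
      obtain ⟨em, hemM', hxem, hemP⟩ := hcov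
      have hemq := cover_in_edges hM'match hqpos 1 Nat.one_lt_two hqpat (Or.inr hqsrc)
        (Or.inr hqtgt) x hxq em hemM' hxem
      have : em ∈ (famEdges (P i)) ∩ Sq := ⟨⟨j, hemP⟩, hemq⟩
      rw [hint] at this
      exact this
    -- q is in fact an (M i)-augmenting path of length 2i+1
    have hq' : IsAugPath G (M i) q.walk := by
      refine ⟨hqpath, hqpos, ?_, ?_, ?_⟩
      · rintro ⟨g, hgN, hxg⟩
        by_cases hgEP : g ∈ famEdges (P i)
        · obtain ⟨j, hgj⟩ := hgEP
          exact hvd j q.src q.walk.start_mem_support (hk_mem_support_of_edge hgj hxg)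
        · exact hqsrc ⟨g, by rw [hstepi]; exact Set.mem_symmDiff.mpr (Or.inl ⟨hgN, hgEP⟩), hxg⟩
      · rintro ⟨g, hgN, hxg⟩
        by_cases hgEP : g ∈ famEdges (P i)
        · obtain ⟨j, hgj⟩ := hgEP
          exact hvd j q.tgt q.walk.end_mem_support (hk_mem_support_of_edge hgj hxg)
        · exact hqtgt ⟨g, by rw [hstepi]; exact Set.mem_symmDiff.mpr (Or.inl ⟨hgN, hgEP⟩), hxg⟩
      · intro t h
        have hmemiff : ∀ e : Sym2 V, e ∈ M (i + 1) ↔ e ∈ symmDiff (M i) (famEdges (P i)) :=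
          fun e => by rw [hstepi]
        rw [Nat.odd_iff]
        have heSq : q.walk.edges.get ⟨t, h⟩ ∈ Sq := by rw [hSqdef]; exact List.get_mem ..
        have heEP : q.walk.edges.get ⟨t, h⟩ ∉ famEdges (P i) := by
          intro hc
          have : q.walk.edges.get ⟨t, h⟩ ∈ (famEdges (P i)) ∩ Sq := ⟨hc, heSq⟩
          rw [hint] at this
          exact this
        constructor
        · intro hmN
          exact (hqpat t h).mp ((hmemiff _).mpr (Set.mem_symmDiff.mpr (Or.inl ⟨hmN, heEP⟩)))
        · intro ht
          have hm := (hmemiff _).mp ((hqpat t h).mpr ht)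
          rcases Set.mem_symmDiff.mp hm with ⟨h1, -⟩ | ⟨h1, -⟩
          · exact h1
          · exact (heEP h1).elim
    exact hmaximal i ⟨q.src, q.tgt, q.walk, hq'⟩ hqlen1 (fun j => hvd j)
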